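/- Let z̃ = ζ·β^{e} be a positive real with β^{t-1} ≤ ζ ≤ β^t and E_min ≤ e < E_max. Then the element of Dekker's system closest to z̃ is either ⌊ζ⌋·β^e or ⌈ζ⌉·β^e. -/
import Mathlib


/-- Dekker's floating point number system as a set of reals. -/
def Dekker (β : ℤ) (t : ℕ) (Emin Emax : ℤ) : Set ℝ :=
  {x | ∃ m e : ℤ, |m| < β ^ t ∧ Emin ≤ e ∧ e ≤ Emax ∧ x = (m : ℝ) * (β : ℝ) ^ e}

/-- the closest element of Dekker's system to ζ·β^e is ⌊ζ⌋·β^e or ⌈ζ⌉·β^e. -/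
theorem dekker_closest_floor_or_ceil
    (β : ℤ) (t : ℕ) (Emin Emax : ℤ) (hβ : 2 ≤ β) (ht : 1 ≤ t)
    (ζ : ℝ) (e : ℤ)
    (hζ1 : (β : ℝ) ^ (t - 1) ≤ ζ) (hζ2 : ζ ≤ (β : ℝ) ^ t)
    (he1 : Emin ≤ e) (he2 : e < Emax) :
    ∃ c ∈ ({(⌊ζ⌋ : ℝ) * (β : ℝ) ^ e, (⌈ζ⌉ : ℝ) * (β : ℝ) ^ e} : Set ℝ),
      ∀ w ∈ Dekker β t Emin Emax, |c - ζ * (β : ℝ) ^ e| ≤ |w - ζ * (β : ℝ) ^ e| := by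
  have hb1 : (1 : ℝ) < (β : ℝ) := by exact_mod_cast lt_of_lt_of_le one_lt_two hβ
  have hb0 : (0 : ℝ) < (β : ℝ) := lt_trans one_pos hb1
  have hbne : (β : ℝ) ≠ 0 := ne_of_gt hb0
  have hp : (0 : ℝ) < (β : ℝ) ^ e := zpow_pos hb0 e
  set p : ℝ := (β : ℝ) ^ e with hpdef
  -- floor is at least β^(t-1)
  have hfl : ((β ^ (t - 1) : ℤ) : ℝ) ≤ ζ := by push_cast; exact hζ1
  have hfloor_ge : (β : ℝ) ^ (t - 1) ≤ (⌊ζ⌋ : ℝ) := by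
    have := Int.le_floor.mpr hfl
    exact_mod_cast this
  -- key dichotomy
  have key : ∀ w ∈ Dekker β t Emin Emax,
      w ≤ (⌊ζ⌋ : ℝ) * p ∨ (⌈ζ⌉ : ℝ) * p ≤ w := by
    rintro w ⟨m, f, hm, _, _, rfl⟩
    rcases le_or_gt e f with hef | hef
    · -- w is an integer multiple of p
      set k : ℤ := m * β ^ (f - e).toNat with hk
      have hw : (m : ℝ) * (β : ℝ) ^ f = (k : ℝ) * p := by
        have : (β : ℝ) ^ f = (β : ℝ) ^ (f - e) * (β : ℝ) ^ e := by
          rw [← zpow_add₀ hbne]; ring_nf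
        rw [this, hk]
        push_cast
        rw [← zpow_natCast (β : ℝ) (f - e).toNat, Int.toNat_of_nonneg (by omega)]
        ring
      rw [hw]
      rcases le_or_gt (k : ℝ) ζ with h | h
      · left
        have : k ≤ ⌊ζ⌋ := Int.le_floor.mpr h
        exact mul_le_mul_of_nonneg_right (by exact_mod_cast this) hp.le
      · right
        have : ⌈ζ⌉ ≤ k := Int.ceil_le.mpr h.le
        exact mul_le_mul_of_nonneg_right (by exact_mod_cast this) hp.le
    · -- small exponent: w < β^(t-1) * p ≤ floor point
      left
      have hm' : (m : ℝ) ≤ (β : ℝ) ^ t - 1 := by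
        have : m ≤ β ^ t - 1 := by
          have := (abs_lt.mp hm).2; omega
        calc (m : ℝ) ≤ ((β ^ t - 1 : ℤ) : ℝ) := by exact_mod_cast this
          _ = (β : ℝ) ^ t - 1 := by push_cast; ring
      have hf' : (β : ℝ) ^ f ≤ (β : ℝ) ^ (e - 1) :=
        zpow_le_zpow_right₀ hb1.le (by omega)
      have h1 : (m : ℝ) * (β : ℝ) ^ f ≤ ((β : ℝ) ^ t - 1) * (β : ℝ) ^ (e - 1) := by
        rcases le_or_gt (m : ℝ) 0 with h0 | h0
        · calc (m : ℝ) * (β : ℝ) ^ f ≤ 0 :=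
                mul_nonpos_of_nonpos_of_nonneg h0 (zpow_pos hb0 f).le
            _ ≤ ((β : ℝ) ^ t - 1) * (β : ℝ) ^ (e - 1) := by
                apply mul_nonneg _ (zpow_pos hb0 _).le
                have : (1 : ℝ) ≤ (β : ℝ) ^ t := one_le_pow₀ hb1.le (n := t)
                linarith
        · exact mul_le_mul hm' hf' (zpow_pos hb0 f).le (by linarith [one_le_pow₀ hb1.le (n := t)])
      have h2 : ((β : ℝ) ^ t - 1) * (β : ℝ) ^ (e - 1) ≤ (β : ℝ) ^ (t - 1) * p := by
        have hteq : (β : ℝ) ^ (t - 1) * p = (β : ℝ) ^ t * (β : ℝ) ^ (e - 1) := by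
          rw [hpdef]
          have h3 : (β : ℝ) ^ e = (β : ℝ) ^ (e - 1) * (β : ℝ) := by
            rw [← zpow_add_one₀ hbne]; norm_num
          have h4 : (β : ℝ) ^ t = (β : ℝ) ^ (t - 1) * (β : ℝ) := by
            rw [← pow_succ]; congr 1; omega
          rw [h3, h4]; ring
        rw [hteq]
        have : ((β : ℝ) ^ t - 1) ≤ (β : ℝ) ^ t := by linarith
        exact mul_le_mul_of_nonneg_right this (zpow_pos hb0 _).le
      have h3 : (β : ℝ) ^ (t - 1) * p ≤ (⌊ζ⌋ : ℝ) * p :=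
        mul_le_mul_of_nonneg_right hfloor_ge hp.le
      linarith
  set F : ℝ := (⌊ζ⌋ : ℝ) * p
  set C : ℝ := (⌈ζ⌉ : ℝ) * p
  set z : ℝ := ζ * p
  have hFz : F ≤ z := mul_le_mul_of_nonneg_right (Int.floor_le ζ) hp.le
  have hzC : z ≤ C := mul_le_mul_of_nonneg_right (Int.le_ceil ζ) hp.le
  rcases le_or_gt (z - F) (C - z) with h | h
  · refine ⟨F, Or.inl rfl, fun w hw => ?_⟩
    have hF : |F - z| = z - F := by rw [abs_sub_comm, abs_of_nonneg (by linarith)]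
    rcases key w hw with hw' | hw'
    · rw [hF, abs_sub_comm, abs_of_nonneg (by linarith)]; linarith
    · rw [hF, abs_of_nonneg (by linarith)]; linarith
  · refine ⟨C, Or.inr rfl, fun w hw => ?_⟩
    have hC : |C - z| = C - z := abs_of_nonneg (by linarith)
    rcases key w hw with hw' | hw'
    · rw [hC, abs_sub_comm, abs_of_nonneg (by linarith)]; linarith
    · rw [hC, abs_of_nonneg (by linarith)]; linarith
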